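/- Let q = p^e with p prime, let 0 ≤ k < e, and let A = F_q[X_1,…,X_ℓ]/⟨t_1(X_1),…,t_ℓ(X_ℓ)⟩ where each t_i(X_i) is a square-free polynomial in F_q[X_i]. Let λ be a unit of A satisfying λ^{p^e} = λ and λ^{1+p^{e−k}} = 1. If C is a λ-constacyclic code of length n over A, then both C^{⊥k} and the k-Galois hull hull_k(C) = C ∩ C^{⊥k} are λ-constacyclic codes of length n over A. -/

import Mathlib

set_option synthInstance.maxHeartbeats 1000000
set_option maxHeartbeats 1000000

/-- The `k`-Galois dual (as a set) of a set of codewords `C ⊆ R^ι`,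
with respect to the inner product `⟨u,v⟩ = ∑ i, u i * (v i)^pk`. -/
def galoisDualSet {R : Type*} [CommRing R] {ι : Type*} [Fintype ι]
    (pk : ℕ) (C : Set (ι → R)) : Set (ι → R) :=
  {v | ∀ c ∈ C, ∑ i, c i * v i ^ pk = 0}

/-- The `μ`-constacyclic shift `(c_0, …, c_{n-1}) ↦ (μ c_{n-1}, c_0, …, c_{n-2})`
on `R^n`, with coordinates indexed by `ZMod n`. -/
def constaShift {R : Type*} [CommRing R] {n : ℕ} (μ : R) (c : ZMod n → R) :
    ZMod n → R :=
  fun i => if i = 0 then μ * c (i - 1) else c (i - 1)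

/-- The affine algebra `F[X_1, …, X_ℓ] / ⟨t_1(X_1), …, t_ℓ(X_ℓ)⟩`. -/
abbrev AffineAlgebra {F : Type*} [Field F] {ℓ : ℕ} (t : Fin ℓ → Polynomial F) : Type _ :=
  MvPolynomial (Fin ℓ) F ⧸
    Ideal.span (Set.range fun i =>
      Polynomial.aeval (MvPolynomial.X i : MvPolynomial (Fin ℓ) F) (t i))

lemma constaShift_iter {R : Type*} [CommRing R] {n : ℕ} [NeZero n] (μ : R) (x : ZMod n → R) :
    ∀ m, m ≤ n → ∀ i : ZMod n, (constaShift μ)^[m] x i =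
      if i.val < m then μ * x (i - m) else x (i - m) := by
  intro m
  induction m with
  | zero => intro _ i; simp
  | succ m ih =>
    intro hm i
    rw [Function.iterate_succ_apply', constaShift]
    by_cases hi : i = 0
    · subst hi
      simp only [if_pos rfl]
      rw [ih (le_of_lt (Nat.lt_of_succ_le hm))]
      have hv : ((0 : ZMod n) - 1).val = n - 1 := by
        obtain ⟨n', rfl⟩ : ∃ n', n = n' + 1 := ⟨n - 1, (Nat.succ_pred_eq_of_pos (NeZero.pos n)).symm⟩
        simpa using ZMod.val_neg_one n'
      have hnm : ¬ ((0:ZMod n) - 1).val < m := by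
        rw [hv]; omega
      have h0 : ZMod.val (0 : ZMod n) < m + 1 := by
        have : ZMod.val (0 : ZMod n) = 0 := ZMod.val_zero
        omega
      rw [if_neg hnm, if_pos h0]
      congr 1
      push_cast
      ring
    · rw [if_neg hi, ih (le_of_lt (Nat.lt_of_succ_le hm))]
      have h1n : 1 < n := by
        rcases Nat.lt_or_ge n 2 with h | h
        · interval_cases n
          · exact absurd rfl (NeZero.ne 0)
          · exact absurd (Subsingleton.elim i 0) hi
        · omega
      have hvi : 0 < i.val := Nat.pos_of_ne_zero (fun h => hi (by
        rwa [← ZMod.val_eq_zero] ))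
      have hv1 : (1 : ZMod n).val = 1 := by
        rw [ZMod.val_one_eq_one_mod, Nat.mod_eq_of_lt h1n]
      have hv : (i - 1).val = i.val - 1 := by
        rw [ZMod.val_sub (by omega), hv1]
      have hiff : ((i - 1).val < m) ↔ (i.val < m + 1) := by
        rw [hv]; omega
      have harg : i - 1 - (m : ZMod n) = i - ((m : ℕ) + 1 : ℕ) := by
        push_cast; ring
      simp only [harg]
      exact if_congr hiff rfl rfl

lemma constaShift_iter_n {R : Type*} [CommRing R] {n : ℕ} [NeZero n] (μ : R) (x : ZMod n → R) :
    (constaShift μ)^[n] x = μ • x := by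
  funext i
  rw [constaShift_iter μ x n le_rfl i, if_pos (ZMod.val_lt i)]
  simp



lemma exists_galoisDualSubmodule {R : Type*} [CommRing R] {ι : Type*} [Fintype ι]
    (p k : ℕ) [ExpChar R p] (hp : p ≠ 0) (C : Set (ι → R)) :
    ∃ D : Submodule R (ι → R), (D : Set (ι → R)) = galoisDualSet (p ^ k) C := by
  refine ⟨{ carrier := galoisDualSet (p ^ k) C
            zero_mem' := ?_
            add_mem' := ?_
            smul_mem' := ?_ }, rfl⟩
  · intro u v hu hv c hc
    have hsum : ∑ x, c x * ((u + v) x) ^ p ^ k =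
        (∑ x, c x * u x ^ p ^ k) + ∑ x, c x * v x ^ p ^ k := by
      rw [← Finset.sum_add_distrib]
      exact Finset.sum_congr rfl fun i _ => by
        rw [Pi.add_apply, add_pow_expChar_pow, mul_add]
    rw [hsum, hu c hc, hv c hc, add_zero]
  · intro c _
    simp [zero_pow (pow_ne_zero k hp)]
  · intro a v hv c hc
    have : ∑ i, c i * ((a • v) i) ^ p ^ k = a ^ p ^ k * ∑ i, c i * v i ^ p ^ k := by
      rw [Finset.mul_sum]
      exact Finset.sum_congr rfl fun i _ => by
        simp only [Pi.smul_apply, smul_eq_mul, mul_pow]; ring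
    rw [this, hv c hc, mul_zero]

lemma constaShift_surj_on {R : Type*} [CommRing R] {n : ℕ} [NeZero n] (lam : Rˣ)
    (C : Submodule R (ZMod n → R)) (hC : ∀ c ∈ C, constaShift (lam : R) c ∈ C) :
    ∀ c ∈ C, ∃ c' ∈ C, constaShift (lam : R) c' = c := by
  have hiterC : ∀ (m : ℕ), ∀ y ∈ C, (constaShift (lam : R))^[m] y ∈ C := by
    intro m
    induction m with
    | zero => intro y hy; simpa using hy
    | succ m ih =>
      intro y hy
      rw [Function.iterate_succ_apply']
      exact hC _ (ih y hy)
  intro c hc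
  refine ⟨(constaShift (lam : R))^[n - 1] (((lam⁻¹ : Rˣ) : R) • c),
    hiterC _ _ (C.smul_mem _ hc), ?_⟩
  rw [← Function.iterate_succ_apply' (constaShift (lam : R))]
  have hn1 : (n - 1).succ = n := Nat.succ_pred_eq_of_pos (NeZero.pos n)
  rw [hn1, constaShift_iter_n]
  funext i
  show (lam : R) * (((lam⁻¹ : Rˣ) : R) • c) i = c i
  show (lam : R) * (((lam⁻¹ : Rˣ) : R) * c i) = c i
  exact Units.mul_inv_cancel_left lam (c i)

lemma galoisDualSet_shift_mem {R : Type*} [CommRing R] {n : ℕ} [NeZero n] {pk : ℕ}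
    (lam : Rˣ) (hlam1 : (lam : R) ^ (1 + pk) = 1)
    (C : Submodule R (ZMod n → R)) (hC : ∀ c ∈ C, constaShift (lam : R) c ∈ C)
    {v : ZMod n → R} (hv : v ∈ galoisDualSet pk (C : Set (ZMod n → R))) :
    constaShift (lam : R) v ∈ galoisDualSet pk (C : Set (ZMod n → R)) := by
  intro c hc
  obtain ⟨c', hc', rfl⟩ := constaShift_surj_on lam C hC c hc
  have hterm : ∀ i : ZMod n,
      constaShift (lam : R) c' i * (constaShift (lam : R) v i) ^ pk =
        c' (i - 1) * v (i - 1) ^ pk := by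
    intro i
    by_cases hi : i = 0
    · simp only [constaShift, if_pos hi]
      have : ((lam : R) * c' (i - 1)) * (((lam : R) * v (i - 1)) ^ pk) =
          ((lam : R) ^ (1 + pk)) * (c' (i - 1) * v (i - 1) ^ pk) := by
        rw [mul_pow, pow_add, pow_one]; ring
      rw [this, hlam1, one_mul]
    · simp only [constaShift, if_neg hi]
  calc ∑ i, constaShift (lam : R) c' i * (constaShift (lam : R) v i) ^ pk
      = ∑ i, c' (i - 1) * v (i - 1) ^ pk := Finset.sum_congr rfl fun i _ => hterm i
    _ = ∑ j, c' j * v j ^ pk :=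
        Fintype.sum_equiv (Equiv.subRight (1 : ZMod n)) _ _ (fun i => rfl)
    _ = 0 := hv c' hc'

theorem stmt1 {p e k ℓ n : ℕ} (hp : p.Prime) (he : 0 < e) (hk : k < e) [NeZero n]
    {F : Type*} [Field F] [Fintype F] (hcard : Fintype.card F = p ^ e)
    (t : Fin ℓ → Polynomial F) (ht : ∀ i, Squarefree (t i))
    (lam : (AffineAlgebra t)ˣ) (hlam : (lam : AffineAlgebra t) ^ p ^ e = lam)
    (hord : (lam : AffineAlgebra t) ^ (1 + p ^ (e - k)) = 1)
    (C : Submodule (AffineAlgebra t) (ZMod n → AffineAlgebra t))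
    (hC : ∀ c ∈ C, constaShift (lam : AffineAlgebra t) c ∈ C) :
    (∃ D : Submodule (AffineAlgebra t) (ZMod n → AffineAlgebra t),
        (D : Set (ZMod n → AffineAlgebra t)) =
            galoisDualSet (p ^ k) (C : Set (ZMod n → AffineAlgebra t)) ∧
          ∀ x ∈ D, constaShift (lam : AffineAlgebra t) x ∈ D) ∧
      ∃ H : Submodule (AffineAlgebra t) (ZMod n → AffineAlgebra t),
        (H : Set (ZMod n → AffineAlgebra t)) =
            (C : Set (ZMod n → AffineAlgebra t)) ∩
              galoisDualSet (p ^ k) (C : Set (ZMod n → AffineAlgebra t)) ∧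
          ∀ x ∈ H, constaShift (lam : AffineAlgebra t) x ∈ H := by
  rcases subsingleton_or_nontrivial (AffineAlgebra t) with hs | hs
  · refine ⟨⟨⊤, ?_, fun x _ => trivial⟩, ⟨⊤, ?_, fun x _ => trivial⟩⟩
    · ext v
      simp only [Submodule.top_coe, Set.mem_univ, true_iff, galoisDualSet, Set.mem_setOf_eq]
      intro c _
      exact Subsingleton.elim _ _
    · ext v
      simp only [Submodule.top_coe, Set.mem_univ, true_iff, Set.mem_inter_iff,
        SetLike.mem_coe, galoisDualSet, Set.mem_setOf_eq]
      constructor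
      · have : v = 0 := Subsingleton.elim _ _
        rw [this]; exact C.zero_mem
      · intro c _; exact Subsingleton.elim _ _
  · -- characteristic facts
    haveI : CharP F (ringChar F) := ringChar.charP F
    obtain ⟨m, hrp, hcard'⟩ := FiniteField.card F (ringChar F)
    have hpr : p = ringChar F := by
      have h1 : p ∣ (ringChar F) ^ (m : ℕ) := by
        rw [← hcard', hcard]
        exact dvd_pow_self p he.ne'
      exact (Nat.prime_dvd_prime_iff_eq hp hrp).mp (hp.dvd_of_dvd_pow h1)
    haveI : CharP F p := hpr ▸ ringChar.charP F
    haveI : CharP (AffineAlgebra t) p := charP_of_injective_algebraMap' (A := AffineAlgebra t) F p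
    haveI : Fact p.Prime := ⟨hp⟩
    haveI : ExpChar (AffineAlgebra t) p := ExpChar.prime hp
    have hpk : p ^ k ≠ 0 := pow_ne_zero k hp.pos.ne'
    -- lam ^ (1 + p^k) = 1
    have hlam1 : (lam : AffineAlgebra t) ^ (1 + p ^ k) = 1 := by
      have h1 : (lam : AffineAlgebra t) ^ ((1 + p ^ (e - k)) * p ^ k) = 1 := by
        rw [pow_mul, hord, one_pow]
      have h2 : (1 + p ^ (e - k)) * p ^ k = p ^ k + p ^ e := by
        rw [add_mul, one_mul, ← pow_add, Nat.sub_add_cancel hk.le]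
      rw [h2, pow_add, hlam] at h1
      rw [pow_add, pow_one]
      rw [mul_comm]
      exact h1
    obtain ⟨D, hDset⟩ := exists_galoisDualSubmodule (R := AffineAlgebra t) p k
      hp.pos.ne' (C : Set (ZMod n → AffineAlgebra t))
    have hpk1 : (lam : AffineAlgebra t) ^ (1 + p ^ k) = 1 := hlam1
    have hDshift : ∀ x ∈ D, constaShift (lam : AffineAlgebra t) x ∈ D := by
      intro x hx
      have hx' : x ∈ galoisDualSet (p ^ k) (C : Set (ZMod n → AffineAlgebra t)) := by
        rw [← SetLike.mem_coe, hDset] at hx; exact hx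
      have := galoisDualSet_shift_mem lam hpk1 C hC hx'
      rw [← SetLike.mem_coe, hDset]
      exact this
    refine ⟨⟨D, hDset, hDshift⟩, ⟨C ⊓ D, ?_, ?_⟩⟩
    · rw [Submodule.coe_inf, hDset]
    · intro x hx
      rw [Submodule.mem_inf] at hx ⊢
      exact ⟨hC x hx.1, hDshift x hx.2⟩
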